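/- For every integer d ≥ 2, the quantity C(2d+1, d) + Σ_{i=1}^{d} C(2d+1, 2i)·C(2d+1-2i, d-i) - (2d+1)·C(2d+1, d) + C(2d+1, 2) is strictly positive. -/

import Mathlib

theorem stmt_8 (d : ℕ) (hd : 2 ≤ d) :
    0 < (Nat.choose (2 * d + 1) d : ℤ)
        + ∑ i ∈ Finset.Icc 1 d,
            (Nat.choose (2 * d + 1) (2 * i) : ℤ) * (Nat.choose (2 * d + 1 - 2 * i) (d - i) : ℤ)
        - (2 * (d : ℤ) + 1) * (Nat.choose (2 * d + 1) d : ℤ) + (Nat.choose (2 * d + 1) 2 : ℤ) := by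
  rcases eq_or_lt_of_le hd with h | h
  · subst h
    norm_num [show Finset.Icc 1 2 = {1, 2} from rfl,
      show Nat.choose 5 2 = 10 from rfl, show Nat.choose 5 4 = 5 from rfl,
      show Nat.choose 3 1 = 3 from rfl, show Nat.choose 1 0 = 1 from rfl]
  · have hd3 : 3 ≤ d := h
    have hApos : (0 : ℤ) < (Nat.choose (2 * d - 1) (d - 1) : ℤ) := by
      exact_mod_cast Nat.choose_pos (show d - 1 ≤ 2 * d - 1 by omega)
    have hC2 : (Nat.choose (2 * d + 1) 2 : ℤ) = d * (2 * d + 1) := by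
      rw [Nat.choose_two_right]
      have : (2 * d + 1) * (2 * d + 1 - 1) / 2 = d * (2 * d + 1) := by
        rw [show 2 * d + 1 - 1 = 2 * d from rfl,
          show (2 * d + 1) * (2 * d) = d * (2 * d + 1) * 2 by ring,
          Nat.mul_div_cancel _ (by norm_num)]
      exact_mod_cast this
    have ha' : (2 * d + 1) * Nat.choose (2 * d) (d - 1) = Nat.choose (2 * d + 1) d * d := by
      have := Nat.add_one_mul_choose_eq (2 * d) (d - 1)
      rwa [show d - 1 + 1 = d by omega] at this
    have hb' : Nat.choose (2 * d - 1) (d - 1) * (2 * d) = Nat.choose (2 * d) (d - 1) * (d + 1) := by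
      have := Nat.choose_mul_succ_eq (2 * d - 1) (d - 1)
      rwa [show 2 * d - 1 + 1 = 2 * d by omega, show 2 * d - (d - 1) = d + 1 by omega] at this
    have ha : ((2 * d + 1 : ℤ)) * (Nat.choose (2 * d) (d - 1) : ℤ)
        = (Nat.choose (2 * d + 1) d : ℤ) * d := by exact_mod_cast congrArg (Nat.cast : ℕ → ℤ) ha'
    have hb : (Nat.choose (2 * d - 1) (d - 1) : ℤ) * (2 * d)
        = (Nat.choose (2 * d) (d - 1) : ℤ) * (d + 1) := by
      exact_mod_cast congrArg (Nat.cast : ℕ → ℤ) hb'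
    have e1 : (d : ℤ) * (d + 1) * (Nat.choose (2 * d + 1) d : ℤ)
        = 2 * d * (2 * d + 1) * (Nat.choose (2 * d - 1) (d - 1) : ℤ) := by
      linear_combination (-(d : ℤ) - 1) * ha - (2 * (d:ℤ) + 1) * hb
    have hd3' : (3 : ℤ) ≤ (d : ℤ) := by exact_mod_cast hd3
    have key : 2 * (d : ℤ) * (Nat.choose (2 * d + 1) d : ℤ)
        ≤ (d : ℤ) * (2 * d + 1) * (Nat.choose (2 * d - 1) (d - 1) : ℤ) := by
      nlinarith [e1, hApos, mul_nonneg (mul_nonneg (mul_nonneg (by linarith : (0:ℤ) ≤ (d:ℤ) - 3)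
        (by linarith : (0:ℤ) ≤ (d:ℤ))) (by linarith : (0:ℤ) ≤ 2*(d:ℤ)+1)) hApos.le]
    have hsum : (d : ℤ) * (2 * d + 1) * (Nat.choose (2 * d - 1) (d - 1) : ℤ)
        ≤ ∑ i ∈ Finset.Icc 1 d,
            (Nat.choose (2 * d + 1) (2 * i) : ℤ) * (Nat.choose (2 * d + 1 - 2 * i) (d - i) : ℤ) := by
      have h1 : (Nat.choose (2 * d + 1) (2 * 1) : ℤ) * (Nat.choose (2 * d + 1 - 2 * 1) (d - 1) : ℤ)
          = (d : ℤ) * (2 * d + 1) * (Nat.choose (2 * d - 1) (d - 1) : ℤ) := by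
        rw [show 2 * d + 1 - 2 * 1 = 2 * d - 1 by omega, show 2 * 1 = 2 from rfl, hC2]
      rw [← h1]
      exact Finset.single_le_sum (f := fun i =>
          (Nat.choose (2 * d + 1) (2 * i) : ℤ) * (Nat.choose (2 * d + 1 - 2 * i) (d - i) : ℤ))
        (fun i _ => by positivity) (Finset.mem_Icc.2 ⟨le_refl 1, by omega⟩)
    have hC2pos : (0 : ℤ) < (d : ℤ) * (2 * d + 1) := by positivity
    linarith [hsum, key, hC2.ge, hC2.le]
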